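/- Let q₁, q₂ : ℝ → ℂ satisfy Re qᵢ ≥ 0 and the Hartman–Wintner condition for i = 1,2. Let (gₙ)_{n≥1} be any family of functions gₙ : ℝ → [0,1], and define qⁿ(x,ξ) := q₁(gₙ(x)·ξ) + q₂((1 − gₙ(x))·ξ). Then lim_{|ξ|→∞} inf_{n≥1} inf_{x∈ℝ} Re qⁿ(x,ξ)/log(1+|ξ|) = ∞. -/

import Mathlib

open Filter

lemma hw_aux (q : ℝ → ℂ)
    (hHW : Tendsto (fun ξ : ℝ => (q ξ).re / Real.log (1 + |ξ|)) (cocompact ℝ) atTop)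
    (M : ℝ) :
    ∃ R : ℝ, 1 ≤ R ∧ ∀ η : ℝ, R ≤ |η| → M * Real.log (1 + |η|) ≤ (q η).re := by
  have h := hHW.eventually_ge_atTop M
  rw [cocompact_eq_atBot_atTop, eventually_sup, eventually_atBot, eventually_atTop] at h
  obtain ⟨⟨a, ha⟩, ⟨c, hc⟩⟩ := h
  refine ⟨max (max |a| |c|) 1 + 1, by
    have := le_max_right (max |a| |c|) 1; linarith, fun η hη => ?_⟩
  have hη1 : 1 ≤ |η| := by
    have := le_max_right (max |a| |c|) 1; linarith
  have hlog : 0 < Real.log (1 + |η|) := Real.log_pos (by linarith)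
  have hratio : M ≤ (q η).re / Real.log (1 + |η|) := by
    rcases le_or_gt 0 η with h0 | h0
    · apply hc
      have h1 : |η| = η := abs_of_nonneg h0
      have h2 : |c| ≥ c := le_abs_self c
      have h3 := le_max_right |a| |c|
      have h4 := le_max_left (max |a| |c|) (1 : ℝ)
      linarith
    · apply ha
      have h1 : |η| = -η := abs_of_neg h0
      have h2 : -|a| ≤ a := neg_abs_le a
      have h3 := le_max_left |a| |c|
      have h4 := le_max_left (max |a| |c|) (1 : ℝ)
      linarith
  calc M * Real.log (1 + |η|)
      ≤ ((q η).re / Real.log (1 + |η|)) * Real.log (1 + |η|) :=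
        mul_le_mul_of_nonneg_right hratio hlog.le
    _ = (q η).re := div_mul_cancel₀ _ hlog.ne'

lemma log_half_aux (s : ℝ) (hs : 0 ≤ s) :
    Real.log (1 + s) ≤ 2 * Real.log (1 + s / 2) := by
  have h : (1 : ℝ) + s ≤ (1 + s / 2) ^ 2 := by nlinarith
  calc Real.log (1 + s) ≤ Real.log ((1 + s / 2) ^ 2) :=
        Real.log_le_log (by linarith) h
    _ = 2 * Real.log (1 + s / 2) := by
        rw [Real.log_pow]; push_cast; ring

/-- Let `q₁, q₂ : ℝ → ℂ` have nonnegative real part and satisfy the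
Hartman–Wintner condition `lim_{|ξ|→∞} Re qᵢ(ξ)/log(1+|ξ|) = ∞`. For any family
`gₙ : ℝ → [0,1]` and `qⁿ(x,ξ) := q₁(gₙ(x)·ξ) + q₂((1 − gₙ(x))·ξ)`, one has
`lim_{|ξ|→∞} inf_{n} inf_{x} Re qⁿ(x,ξ)/log(1+|ξ|) = ∞`. -/
theorem glueing_symbols_uniform_hartman_wintner (q₁ q₂ : ℝ → ℂ)
    (hre₁ : ∀ ξ, 0 ≤ (q₁ ξ).re) (hre₂ : ∀ ξ, 0 ≤ (q₂ ξ).re)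
    (hHW₁ : Tendsto (fun ξ : ℝ => (q₁ ξ).re / Real.log (1 + |ξ|)) (cocompact ℝ) atTop)
    (hHW₂ : Tendsto (fun ξ : ℝ => (q₂ ξ).re / Real.log (1 + |ξ|)) (cocompact ℝ) atTop)
    (g : ℕ → ℝ → ℝ) (hg : ∀ n x, g n x ∈ Set.Icc (0 : ℝ) 1) :
    Tendsto (fun ξ : ℝ =>
        (⨅ n : ℕ, ⨅ x : ℝ, (q₁ (g n x * ξ) + q₂ ((1 - g n x) * ξ)).re) /
          Real.log (1 + |ξ|))
      (cocompact ℝ) atTop := by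
  rw [tendsto_atTop]
  intro b
  set M : ℝ := 2 * max b 0 with hMdef
  have hM : 0 ≤ M := by positivity
  have hbM : b ≤ M / 2 := by
    rw [hMdef]; linarith [le_max_left b 0]
  obtain ⟨R₁, hR₁1, hR₁⟩ := hw_aux q₁ hHW₁ M
  obtain ⟨R₂, hR₂1, hR₂⟩ := hw_aux q₂ hHW₂ M
  set R : ℝ := max R₁ R₂ with hRdef
  have hR1 : 1 ≤ R := le_trans hR₁1 (le_max_left _ _)
  have hev : ∀ᶠ ξ : ℝ in cocompact ℝ, 2 * R ≤ |ξ| := by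
    rw [Filter.hasBasis_cocompact.eventually_iff]
    refine ⟨Metric.closedBall 0 (2 * R), isCompact_closedBall 0 (2 * R), fun ξ hξ => ?_⟩
    simp only [Set.mem_compl_iff, Metric.mem_closedBall, Real.dist_eq, sub_zero, not_le] at hξ
    linarith
  filter_upwards [hev] with ξ hξ
  have hξ2 : 2 ≤ |ξ| := by linarith
  have hlog : 0 < Real.log (1 + |ξ|) := Real.log_pos (by linarith)
  rw [le_div_iff₀ hlog]
  refine le_ciInf fun n => le_ciInf fun x => ?_
  obtain ⟨ht0, ht1⟩ := hg n x
  set t : ℝ := g n x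
  have habs : 0 ≤ |ξ| := abs_nonneg ξ
  have hhalf : Real.log (1 + |ξ|) ≤ 2 * Real.log (1 + |ξ| / 2) := log_half_aux _ habs
  have hlog2 : 0 ≤ Real.log (1 + |ξ| / 2) := Real.log_nonneg (by linarith)
  rw [Complex.add_re]
  rcases le_or_gt (1 / 2 : ℝ) t with h | h
  · -- first term is large
    have harg : R₁ ≤ |t * ξ| := by
      rw [abs_mul, abs_of_nonneg ht0]
      have h1 : R₁ ≤ R := le_max_left _ _
      nlinarith
    have h1 := hR₁ (t * ξ) harg
    have h2 : |ξ| / 2 ≤ |t * ξ| := by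
      rw [abs_mul, abs_of_nonneg ht0]; nlinarith
    have h3 : Real.log (1 + |ξ| / 2) ≤ Real.log (1 + |t * ξ|) :=
      Real.log_le_log (by linarith) (by linarith)
    have h4 := hre₂ ((1 - t) * ξ)
    nlinarith [mul_le_mul_of_nonneg_left h3 hM, mul_le_mul_of_nonneg_right hbM hlog.le]
  · -- second term is large
    have h12 : 1 / 2 ≤ 1 - t := by linarith
    have harg : R₂ ≤ |(1 - t) * ξ| := by
      rw [abs_mul, abs_of_nonneg (by linarith : (0:ℝ) ≤ 1 - t)]
      have h1 : R₂ ≤ R := le_max_right _ _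
      nlinarith
    have h1 := hR₂ ((1 - t) * ξ) harg
    have h2 : |ξ| / 2 ≤ |(1 - t) * ξ| := by
      rw [abs_mul, abs_of_nonneg (by linarith : (0:ℝ) ≤ 1 - t)]; nlinarith
    have h3 : Real.log (1 + |ξ| / 2) ≤ Real.log (1 + |(1 - t) * ξ|) :=
      Real.log_le_log (by linarith) (by linarith)
    have h4 := hre₁ (t * ξ)
    nlinarith [mul_le_mul_of_nonneg_left h3 hM, mul_le_mul_of_nonneg_right hbM hlog.le]
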